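/- The volumes of the six simplices Δ₁, …, Δ₆ (as defined by the vertex sets of the triangulation of P₁¹) are respectively Vol(Δ₁) = (1/9)·(2/4³)·(1/6!), Vol(Δ₂) = (1/9)·(1/4²)·(1/6!), Vol(Δ₃) = (1/9)·(2/4²)·(1/6!), Vol(Δ₄) = (1/9)·(1/4²)·(1/6!), Vol(Δ₅) = (1/9)·(1/4²)·(1/6!), Vol(Δ₆) = (1/9)·(2/4³)·(1/6!), and their sum equals 1/17280. -/

import Mathlib

set_option maxRecDepth 10000
set_option maxHeartbeats 1000000


open MeasureTheory
open scoped ENNReal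

noncomputable section

def vO : Fin 6 → ℝ := ![0, 0, 0, 0, 0, 0]
def vP31 : Fin 6 → ℝ := ![0, 0, 1/2, 0, 0, 0]
def vQ3231 : Fin 6 → ℝ := ![0, 0, 1/2, 0, 1/2, 0]
def vQ2321 : Fin 6 → ℝ := ![0, 1/2, 0, 0, 0, 1/2]
def vQ1213 : Fin 6 → ℝ := ![1/2, 0, 0, 1/2, 0, 0]
def vT3113 : Fin 6 → ℝ := ![0, 0, 1/3, 1/3, 0, 0]
def vT2112 : Fin 6 → ℝ := ![1/3, 0, 0, 0, 0, 1/3]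
def vR1 : Fin 6 → ℝ := ![1/3, 1/3, 1/3, 0, 0, 0]
def vK2131 : Fin 6 → ℝ := ![0, 0, 1/4, 0, 0, 1/4]
def vV1231 : Fin 6 → ℝ := ![1/2, 0, 1/4, 0, 0, 0]
def vV3123 : Fin 6 → ℝ := ![0, 1/4, 1/2, 0, 0, 0]

/-- The six simplices `Δ₁, …, Δ₆` of the triangulation of `P₁¹`. -/
noncomputable def Delta1 : Set (Fin 6 → ℝ) :=
  convexHull ℝ {vO, vP31, vQ3231, vQ2321, vT3113, vT2112, vK2131}
noncomputable def Delta2 : Set (Fin 6 → ℝ) :=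
  convexHull ℝ {vO, vP31, vQ3231, vQ2321, vT3113, vT2112, vQ1213}
noncomputable def Delta3 : Set (Fin 6 → ℝ) :=
  convexHull ℝ {vO, vP31, vQ3231, vQ2321, vR1, vT2112, vQ1213}
noncomputable def Delta4 : Set (Fin 6 → ℝ) :=
  convexHull ℝ {vO, vP31, vQ3231, vQ2321, vT3113, vR1, vQ1213}
noncomputable def Delta5 : Set (Fin 6 → ℝ) :=
  convexHull ℝ {vO, vP31, vQ3231, vV1231, vR1, vT2112, vQ1213}
noncomputable def Delta6 : Set (Fin 6 → ℝ) :=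
  convexHull ℝ {vO, vP31, vQ3231, vQ2321, vT3113, vR1, vV3123}

/-- The six simplices listed as a family. -/
noncomputable def Deltas : Fin 6 → Set (Fin 6 → ℝ) :=
  ![Delta1, Delta2, Delta3, Delta4, Delta5, Delta6]


open Set Pointwise Matrix in
private def cornerSet (n : ℕ) : Set (Fin n → ℝ) := {x | (∀ i, 0 ≤ x i) ∧ ∑ i, x i ≤ 1}

open Set Pointwise in
private lemma measurableSet_cornerT (n : ℕ) :
    MeasurableSet {p : ℝ × (Fin n → ℝ) | 0 ≤ p.1 ∧ (∀ i, 0 ≤ p.2 i) ∧ p.1 + ∑ i, p.2 i ≤ 1} := by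
  have : {p : ℝ × (Fin n → ℝ) | 0 ≤ p.1 ∧ (∀ i, 0 ≤ p.2 i) ∧ p.1 + ∑ i, p.2 i ≤ 1} =
      ({p : ℝ × (Fin n → ℝ) | 0 ≤ p.1} ∩
        ((⋂ i, {p : ℝ × (Fin n → ℝ) | 0 ≤ p.2 i}) ∩
          {p : ℝ × (Fin n → ℝ) | p.1 + ∑ i, p.2 i ≤ 1})) := by
    ext p; simp [forall_and]
  rw [this]
  exact (measurableSet_le measurable_const measurable_fst).inter
    ((MeasurableSet.iInter fun i => measurableSet_le measurable_const
      ((measurable_pi_apply i).comp measurable_snd)).inter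
      (measurableSet_le (by fun_prop : Measurable fun p : ℝ × (Fin n → ℝ) => p.1 + ∑ i, p.2 i) measurable_const))

open Set Pointwise in
private lemma volume_cornerSet (n : ℕ) :
    volume (cornerSet n) = ENNReal.ofReal (1 / n.factorial) := by
  induction n with
  | zero =>
    have h : cornerSet 0 = Set.pi univ (fun _ => univ) := by ext x; simp [cornerSet]
    rw [h, volume_pi_pi]
    simp
  | succ n ih =>
    set T : Set (ℝ × (Fin n → ℝ)) :=
      {p | 0 ≤ p.1 ∧ (∀ i, 0 ≤ p.2 i) ∧ p.1 + ∑ i, p.2 i ≤ 1} with hT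
    have hTm : MeasurableSet T := measurableSet_cornerT n
    have hpre : cornerSet (n+1) =
        (MeasurableEquiv.piFinSuccAbove (fun _ : Fin (n+1) => ℝ) 0) ⁻¹' T := by
      ext x
      simp only [cornerSet, mem_setOf_eq, mem_preimage,
        MeasurableEquiv.piFinSuccAbove_apply, hT]
      rw [Fin.forall_fin_succ, Fin.sum_univ_succ]
      simp [Fin.succAbove]
      tauto
    have hmp := volume_preserving_piFinSuccAbove (fun _ : Fin (n+1) => ℝ) 0
    rw [hpre, hmp.measure_preimage hTm.nullMeasurableSet,
      Measure.volume_eq_prod, Measure.prod_apply hTm]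
    have hslice : ∀ t : ℝ, t ≠ 1 → volume (Prod.mk t ⁻¹' T) =
        (Ico (0:ℝ) 1).indicator
          (fun t => ENNReal.ofReal ((1-t)^n * (n.factorial:ℝ)⁻¹)) t := by
      intro t ht
      by_cases h0 : 0 ≤ t
      · by_cases h1 : t < 1
        · have hmem : t ∈ Ico (0:ℝ) 1 := ⟨h0, h1⟩
          rw [indicator_of_mem hmem]
          have hr : (0:ℝ) < 1 - t := by linarith
          have hset : Prod.mk t ⁻¹' T = (1 - t) • cornerSet n := by
            ext y
            rw [mem_smul_set_iff_inv_smul_mem₀ hr.ne']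
            simp only [hT, mem_preimage, mem_setOf_eq, cornerSet, Pi.smul_apply,
              smul_eq_mul]
            constructor
            · rintro ⟨-, hy, hsum⟩
              constructor
              · intro i
                exact mul_nonneg (by positivity) (hy i)
              · rw [← Finset.mul_sum]
                rw [inv_mul_le_iff₀ hr, mul_one]
                linarith
            · rintro ⟨hy, hsum⟩
              rw [← Finset.mul_sum, inv_mul_le_iff₀ hr, mul_one] at hsum
              refine ⟨h0, fun i => ?_, by linarith⟩
              have h := mul_nonneg hr.le (hy i)
              rwa [← mul_assoc, mul_inv_cancel₀ hr.ne', one_mul] at h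
          rw [hset, Measure.addHaar_smul, ih]
          rw [← ENNReal.ofReal_mul (by positivity)]
          congr 1
          rw [Module.finrank_pi]
          simp [abs_of_nonneg hr.le]
        · have hgt : 1 < t := lt_of_le_of_ne (not_lt.1 h1) (Ne.symm ht)
          have hempty : Prod.mk t ⁻¹' T = ∅ := by
            ext y
            simp only [hT, mem_preimage, mem_setOf_eq, mem_empty_iff_false,
              iff_false, not_and]
            intro _ hy
            have : (0:ℝ) ≤ ∑ i, y i := Finset.sum_nonneg fun i _ => hy i
            intro hc
            linarith
          rw [hempty, indicator_of_notMem (by rintro ⟨-, h2⟩; linarith)]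
          simp
      · have hempty : Prod.mk t ⁻¹' T = ∅ := by
          ext y
          simp only [hT, mem_preimage, mem_setOf_eq, mem_empty_iff_false,
            iff_false, not_and]
          intro hc
          exact absurd hc h0
        rw [hempty, indicator_of_notMem (by rintro ⟨h1', -⟩; exact h0 h1')]
        simp
    have hae : ∀ᵐ t : ℝ, volume (Prod.mk t ⁻¹' T) =
        (Ico (0:ℝ) 1).indicator
          (fun t => ENNReal.ofReal ((1-t)^n * (n.factorial:ℝ)⁻¹)) t := by
      filter_upwards [measure_eq_zero_iff_ae_notMem.mp
        (measure_singleton (1:ℝ))] with t ht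
      exact hslice t ht
    rw [lintegral_congr_ae hae, lintegral_indicator measurableSet_Ico]
    have hcont : Continuous fun t : ℝ => (1-t)^n * (n.factorial:ℝ)⁻¹ := by
      fun_prop
    rw [← ofReal_integral_eq_lintegral_ofReal
      ((hcont.integrableOn_Icc (a := 0) (b := 1)).mono_set Ico_subset_Icc_self)
      (by
        filter_upwards [self_mem_ae_restrict measurableSet_Ico] with t ht
        have : (0:ℝ) ≤ 1 - t := by linarith [ht.2]
        positivity)]
    congr 1
    rw [integral_Ico_eq_integral_Ioo, ← integral_Ioc_eq_integral_Ioo,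
      ← intervalIntegral.integral_of_le zero_le_one,
      intervalIntegral.integral_mul_const]
    have hsub := intervalIntegral.integral_comp_sub_left (a := (0:ℝ)) (b := 1)
      (fun x : ℝ => x ^ n) 1
    simp only [sub_zero, sub_self] at hsub
    rw [hsub, integral_pow]
    rw [Nat.factorial_succ]
    push_cast
    field_simp
    simp

open Set Pointwise in
private lemma funLeft_image_stdSimplex (n : ℕ) :
    (LinearMap.funLeft ℝ ℝ (Fin.succ : Fin n → Fin (n+1))) '' stdSimplex ℝ (Fin (n+1)) =
      cornerSet n := by
  apply Subset.antisymm
  · rintro _ ⟨x, ⟨hx0, hxs⟩, rfl⟩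
    rw [Fin.sum_univ_succ] at hxs
    refine ⟨fun j => hx0 _, ?_⟩
    simp only [LinearMap.funLeft_apply]
    have := hx0 0
    linarith
  · rintro y ⟨hy, hsum⟩
    refine ⟨Fin.cons (1 - ∑ i, y i) y, ⟨?_, ?_⟩, ?_⟩
    · intro i
      induction i using Fin.cases with
      | zero => simpa using by linarith
      | succ j => simpa using hy j
    · rw [Fin.sum_univ_succ]
      simp
    · funext j
      simp [LinearMap.funLeft_apply]

open Set Pointwise Matrix in
private lemma volume_hull6 (w : Fin 6 → (Fin 6 → ℝ)) :
    volume (convexHull ℝ (insert (0 : Fin 6 → ℝ) (Set.range w))) =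
      ENNReal.ofReal |(Matrix.of fun i j => w j i).det| * ENNReal.ofReal (1/720) := by
  set N : Matrix (Fin 6) (Fin 6) ℝ := Matrix.of fun i j => w j i with hN
  set M := Matrix.toLin' N with hM
  set p := LinearMap.funLeft ℝ ℝ (Fin.succ : Fin 6 → Fin 7) with hp
  set L := M ∘ₗ p with hLdef
  have hL : ∀ i : Fin 7, L (fun j => if i = j then (1:ℝ) else 0) =
      (Fin.cons 0 w : Fin 7 → (Fin 6 → ℝ)) i := by
    intro i
    induction i using Fin.cases with
    | zero =>
      rw [Fin.cons_zero, hLdef]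
      have h0 : p (fun j => if (0 : Fin 7) = j then (1:ℝ) else 0) = 0 := by
        funext j
        simp [hp, LinearMap.funLeft_apply, (Fin.succ_ne_zero j).symm]
      simp [LinearMap.comp_apply, h0]
    | succ k =>
      rw [Fin.cons_succ, hLdef]
      have h1 : p (fun j => if k.succ = j then (1:ℝ) else 0) = Pi.single k 1 := by
        funext j
        simp [hp, LinearMap.funLeft_apply, Fin.succ_inj, Pi.single_apply, eq_comm]
      simp only [LinearMap.comp_apply, h1, hM, Matrix.toLin'_apply, Matrix.mulVec_single]
      funext r
      simp [hN]
  have key : insert (0 : Fin 6 → ℝ) (Set.range w) =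
      L '' (Set.range fun (i j : Fin 7) => if i = j then (1:ℝ) else 0) := by
    rw [← Set.range_comp]
    apply Subset.antisymm
    · rintro y (rfl | ⟨k, rfl⟩)
      · exact ⟨0, by simpa using hL 0⟩
      · exact ⟨k.succ, by simpa using hL k.succ⟩
    · rintro _ ⟨i, rfl⟩
      show L _ ∈ _
      rw [hL i]
      induction i using Fin.cases with
      | zero => simp
      | succ k => simp
  have hb : convexHull ℝ (Set.range fun (i j : Fin 7) => if i = j then (1:ℝ) else 0) =
      stdSimplex ℝ (Fin 7) := by
    rw [← convexHull_basis_eq_stdSimplex]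
  rw [key, ← LinearMap.image_convexHull, hb]
  have himg : ⇑L '' stdSimplex ℝ (Fin 7) = ⇑M '' (⇑p '' stdSimplex ℝ (Fin 7)) := by
    rw [← Set.image_comp]; rfl
  rw [himg, funLeft_image_stdSimplex 6, Measure.addHaar_image_linearMap, hM,
    LinearMap.det_toLin', volume_cornerSet 6]
  norm_num [Nat.factorial]

private lemma vO_eq_zero : vO = 0 := by funext i; fin_cases i <;> rfl

private lemma ofReal_div_helper : ∀ (a b : ℝ) (c d : ℝ≥0∞), 0 < b →
    ENNReal.ofReal a = c → ENNReal.ofReal b = d →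
    ENNReal.ofReal (a / b) = c / d := by
  rintro a b c d hb rfl rfl
  rw [ENNReal.ofReal_div_of_pos hb]

open Matrix in
private lemma vol_Delta1 : volume Delta1 = ENNReal.ofReal (1/207360) := by
  have hset : ({vO, vP31, vQ3231, vQ2321, vT3113, vT2112, vK2131} : Set (Fin 6 → ℝ)) =
      insert (0 : Fin 6 → ℝ) (Set.range ![vP31, vQ3231, vQ2321, vT3113, vT2112, vK2131]) := by
    rw [vO_eq_zero]
    simp only [Matrix.range_cons, Matrix.range_empty, Set.union_empty,
      Set.union_singleton, Set.singleton_union]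
    ext y; simp; tauto
  have hdet : |(Matrix.of fun i j => (![vP31, vQ3231, vQ2321, vT3113, vT2112, vK2131] : Fin 6 → Fin 6 → ℝ) j i).det| = 1/288 := by
    have htr : (Matrix.of fun i j => (![vP31, vQ3231, vQ2321, vT3113, vT2112, vK2131] : Fin 6 → Fin 6 → ℝ) j i) =
        (Matrix.of ![vP31, vQ3231, vQ2321, vT3113, vT2112, vK2131])ᵀ := rfl
    rw [htr, Matrix.det_transpose]
    simp +decide [Matrix.det_succ_row_zero, Fin.sum_univ_succ, Fin.succAbove,
      vK2131, vP31, vQ2321, vQ3231, vT2112, vT3113]; norm_num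
  rw [Delta1, hset, volume_hull6, hdet, ← ENNReal.ofReal_mul (by norm_num)]
  norm_num

open Matrix in
private lemma vol_Delta2 : volume Delta2 = ENNReal.ofReal (1/103680) := by
  have hset : ({vO, vP31, vQ3231, vQ2321, vT3113, vT2112, vQ1213} : Set (Fin 6 → ℝ)) =
      insert (0 : Fin 6 → ℝ) (Set.range ![vP31, vQ3231, vQ2321, vT3113, vT2112, vQ1213]) := by
    rw [vO_eq_zero]
    simp only [Matrix.range_cons, Matrix.range_empty, Set.union_empty,
      Set.union_singleton, Set.singleton_union]
    ext y; simp; tauto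
  have hdet : |(Matrix.of fun i j => (![vP31, vQ3231, vQ2321, vT3113, vT2112, vQ1213] : Fin 6 → Fin 6 → ℝ) j i).det| = 1/144 := by
    have htr : (Matrix.of fun i j => (![vP31, vQ3231, vQ2321, vT3113, vT2112, vQ1213] : Fin 6 → Fin 6 → ℝ) j i) =
        (Matrix.of ![vP31, vQ3231, vQ2321, vT3113, vT2112, vQ1213])ᵀ := rfl
    rw [htr, Matrix.det_transpose]
    simp +decide [Matrix.det_succ_row_zero, Fin.sum_univ_succ, Fin.succAbove,
      vP31, vQ1213, vQ2321, vQ3231, vT2112, vT3113]; norm_num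
  rw [Delta2, hset, volume_hull6, hdet, ← ENNReal.ofReal_mul (by norm_num)]
  norm_num

open Matrix in
private lemma vol_Delta3 : volume Delta3 = ENNReal.ofReal (1/51840) := by
  have hset : ({vO, vP31, vQ3231, vQ2321, vR1, vT2112, vQ1213} : Set (Fin 6 → ℝ)) =
      insert (0 : Fin 6 → ℝ) (Set.range ![vP31, vQ3231, vQ2321, vR1, vT2112, vQ1213]) := by
    rw [vO_eq_zero]
    simp only [Matrix.range_cons, Matrix.range_empty, Set.union_empty,
      Set.union_singleton, Set.singleton_union]
    ext y; simp; tauto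
  have hdet : |(Matrix.of fun i j => (![vP31, vQ3231, vQ2321, vR1, vT2112, vQ1213] : Fin 6 → Fin 6 → ℝ) j i).det| = 1/72 := by
    have htr : (Matrix.of fun i j => (![vP31, vQ3231, vQ2321, vR1, vT2112, vQ1213] : Fin 6 → Fin 6 → ℝ) j i) =
        (Matrix.of ![vP31, vQ3231, vQ2321, vR1, vT2112, vQ1213])ᵀ := rfl
    rw [htr, Matrix.det_transpose]
    simp +decide [Matrix.det_succ_row_zero, Fin.sum_univ_succ, Fin.succAbove,
      vP31, vQ1213, vQ2321, vQ3231, vR1, vT2112]; norm_num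
  rw [Delta3, hset, volume_hull6, hdet, ← ENNReal.ofReal_mul (by norm_num)]
  norm_num

open Matrix in
private lemma vol_Delta4 : volume Delta4 = ENNReal.ofReal (1/103680) := by
  have hset : ({vO, vP31, vQ3231, vQ2321, vT3113, vR1, vQ1213} : Set (Fin 6 → ℝ)) =
      insert (0 : Fin 6 → ℝ) (Set.range ![vP31, vQ3231, vQ2321, vT3113, vR1, vQ1213]) := by
    rw [vO_eq_zero]
    simp only [Matrix.range_cons, Matrix.range_empty, Set.union_empty,
      Set.union_singleton, Set.singleton_union]
    ext y; simp; tauto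
  have hdet : |(Matrix.of fun i j => (![vP31, vQ3231, vQ2321, vT3113, vR1, vQ1213] : Fin 6 → Fin 6 → ℝ) j i).det| = 1/144 := by
    have htr : (Matrix.of fun i j => (![vP31, vQ3231, vQ2321, vT3113, vR1, vQ1213] : Fin 6 → Fin 6 → ℝ) j i) =
        (Matrix.of ![vP31, vQ3231, vQ2321, vT3113, vR1, vQ1213])ᵀ := rfl
    rw [htr, Matrix.det_transpose]
    simp +decide [Matrix.det_succ_row_zero, Fin.sum_univ_succ, Fin.succAbove,
      vP31, vQ1213, vQ2321, vQ3231, vR1, vT3113]; norm_num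
  rw [Delta4, hset, volume_hull6, hdet, ← ENNReal.ofReal_mul (by norm_num)]
  norm_num

open Matrix in
private lemma vol_Delta5 : volume Delta5 = ENNReal.ofReal (1/103680) := by
  have hset : ({vO, vP31, vQ3231, vV1231, vR1, vT2112, vQ1213} : Set (Fin 6 → ℝ)) =
      insert (0 : Fin 6 → ℝ) (Set.range ![vP31, vQ3231, vV1231, vR1, vT2112, vQ1213]) := by
    rw [vO_eq_zero]
    simp only [Matrix.range_cons, Matrix.range_empty, Set.union_empty,
      Set.union_singleton, Set.singleton_union]
    ext y; simp; tauto
  have hdet : |(Matrix.of fun i j => (![vP31, vQ3231, vV1231, vR1, vT2112, vQ1213] : Fin 6 → Fin 6 → ℝ) j i).det| = 1/144 := by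
    have htr : (Matrix.of fun i j => (![vP31, vQ3231, vV1231, vR1, vT2112, vQ1213] : Fin 6 → Fin 6 → ℝ) j i) =
        (Matrix.of ![vP31, vQ3231, vV1231, vR1, vT2112, vQ1213])ᵀ := rfl
    rw [htr, Matrix.det_transpose]
    simp +decide [Matrix.det_succ_row_zero, Fin.sum_univ_succ, Fin.succAbove,
      vP31, vQ1213, vQ3231, vR1, vT2112, vV1231]; norm_num
  rw [Delta5, hset, volume_hull6, hdet, ← ENNReal.ofReal_mul (by norm_num)]
  norm_num

open Matrix in
private lemma vol_Delta6 : volume Delta6 = ENNReal.ofReal (1/207360) := by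
  have hset : ({vO, vP31, vQ3231, vQ2321, vT3113, vR1, vV3123} : Set (Fin 6 → ℝ)) =
      insert (0 : Fin 6 → ℝ) (Set.range ![vP31, vQ3231, vQ2321, vT3113, vR1, vV3123]) := by
    rw [vO_eq_zero]
    simp only [Matrix.range_cons, Matrix.range_empty, Set.union_empty,
      Set.union_singleton, Set.singleton_union]
    ext y; simp; tauto
  have hdet : |(Matrix.of fun i j => (![vP31, vQ3231, vQ2321, vT3113, vR1, vV3123] : Fin 6 → Fin 6 → ℝ) j i).det| = 1/288 := by
    have htr : (Matrix.of fun i j => (![vP31, vQ3231, vQ2321, vT3113, vR1, vV3123] : Fin 6 → Fin 6 → ℝ) j i) =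
        (Matrix.of ![vP31, vQ3231, vQ2321, vT3113, vR1, vV3123])ᵀ := rfl
    rw [htr, Matrix.det_transpose]
    simp +decide [Matrix.det_succ_row_zero, Fin.sum_univ_succ, Fin.succAbove,
      vP31, vQ2321, vQ3231, vR1, vT3113, vV3123]; norm_num
  rw [Delta6, hset, volume_hull6, hdet, ← ENNReal.ofReal_mul (by norm_num)]
  norm_num

/-- The volumes of the six simplices of the triangulation of `P₁¹`, and
their sum `1/17280`. -/
theorem volume_simplices :
    volume Delta1 = (1 / 9) * (2 / 4 ^ 3) * (1 / Nat.factorial 6) ∧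
    volume Delta2 = (1 / 9) * (1 / 4 ^ 2) * (1 / Nat.factorial 6) ∧
    volume Delta3 = (1 / 9) * (2 / 4 ^ 2) * (1 / Nat.factorial 6) ∧
    volume Delta4 = (1 / 9) * (1 / 4 ^ 2) * (1 / Nat.factorial 6) ∧
    volume Delta5 = (1 / 9) * (1 / 4 ^ 2) * (1 / Nat.factorial 6) ∧
    volume Delta6 = (1 / 9) * (2 / 4 ^ 3) * (1 / Nat.factorial 6) ∧
    ∑ i : Fin 6, volume (Deltas i) = 1 / 17280 := by
  have E1 : ((1:ℝ≥0∞) / 9) * (2 / 4 ^ 3) * (1 / Nat.factorial 6) =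
      ENNReal.ofReal (1/207360) := by
    rw [← ofReal_div_helper 1 9 _ _ (by norm_num) (by simp) (by simp),
        ← ofReal_div_helper 2 (4^3) _ _ (by norm_num) (by simp) (by norm_num),
        ← ofReal_div_helper 1 (Nat.factorial 6) _ _ (by norm_num [Nat.factorial])
          (by simp) (by norm_num [Nat.factorial]),
        ← ENNReal.ofReal_mul (by norm_num), ← ENNReal.ofReal_mul (by norm_num)]
    rw [ENNReal.ofReal_eq_ofReal_iff (by norm_num [Nat.factorial]) (by norm_num)]
    norm_num [Nat.factorial]
  have E2 : ((1:ℝ≥0∞) / 9) * (1 / 4 ^ 2) * (1 / Nat.factorial 6) =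
      ENNReal.ofReal (1/103680) := by
    rw [← ofReal_div_helper 1 9 _ _ (by norm_num) (by simp) (by simp),
        ← ofReal_div_helper 1 (4^2) _ _ (by norm_num) (by simp) (by norm_num),
        ← ofReal_div_helper 1 (Nat.factorial 6) _ _ (by norm_num [Nat.factorial])
          (by simp) (by norm_num [Nat.factorial]),
        ← ENNReal.ofReal_mul (by norm_num), ← ENNReal.ofReal_mul (by norm_num)]
    rw [ENNReal.ofReal_eq_ofReal_iff (by norm_num [Nat.factorial]) (by norm_num)]
    norm_num [Nat.factorial]
  have E3 : ((1:ℝ≥0∞) / 9) * (2 / 4 ^ 2) * (1 / Nat.factorial 6) =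
      ENNReal.ofReal (1/51840) := by
    rw [← ofReal_div_helper 1 9 _ _ (by norm_num) (by simp) (by simp),
        ← ofReal_div_helper 2 (4^2) _ _ (by norm_num) (by simp) (by norm_num),
        ← ofReal_div_helper 1 (Nat.factorial 6) _ _ (by norm_num [Nat.factorial])
          (by simp) (by norm_num [Nat.factorial]),
        ← ENNReal.ofReal_mul (by norm_num), ← ENNReal.ofReal_mul (by norm_num)]
    rw [ENNReal.ofReal_eq_ofReal_iff (by norm_num [Nat.factorial]) (by norm_num)]
    norm_num [Nat.factorial]
  have Esum : ((1:ℝ≥0∞) / 17280) = ENNReal.ofReal (1/17280) := by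
    rw [← ofReal_div_helper 1 17280 _ _ (by norm_num) (by simp) (by norm_num)]
  refine ⟨by rw [vol_Delta1, E1], by rw [vol_Delta2, E2], by rw [vol_Delta3, E3],
    by rw [vol_Delta4, E2], by rw [vol_Delta5, E2], by rw [vol_Delta6, E1], ?_⟩
  rw [show (∑ i : Fin 6, volume (Deltas i)) =
      volume Delta1 + volume Delta2 + volume Delta3 + volume Delta4 +
        volume Delta5 + volume Delta6 by
    rw [Fin.sum_univ_six]; rfl]
  rw [vol_Delta1, vol_Delta2, vol_Delta3, vol_Delta4, vol_Delta5, vol_Delta6, Esum,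
    ← ENNReal.ofReal_add (by norm_num) (by norm_num),
    ← ENNReal.ofReal_add (by norm_num) (by norm_num),
    ← ENNReal.ofReal_add (by norm_num) (by norm_num),
    ← ENNReal.ofReal_add (by norm_num) (by norm_num),
    ← ENNReal.ofReal_add (by norm_num) (by norm_num)]
  rw [ENNReal.ofReal_eq_ofReal_iff (by norm_num) (by norm_num)]
  norm_num
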